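/- Let P be an N-element poset, let x ∈ P, and let X = {y ∈ P : y <_P x}. Suppose that every element of P that is comparable with some element of X is also comparable with x. If L and L̃ are labelings of P that agree on P ∖ X, then for every integer γ ≥ 1 the labelings ∂^γ(L) and ∂^γ(L̃) also agree on P ∖ X. -/

import Mathlib

open scoped Classical

noncomputable section

abbrev Labeling (P : Type*) [Fintype P] : Type _ := P ≃ Fin (Fintype.card P)

variable {P : Type*} [Fintype P] [PartialOrder P]

def IsLinearExt (L : Labeling P) : Prop := ∀ x y : P, x ≤ y → L x ≤ L y

def lSucc (L : Labeling P) (v : P)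
    (h : (Finset.univ.filter fun y => v < y).Nonempty) : P :=
  L.symm (((Finset.univ.filter fun y => v < y).image L).min' (h.image _))

lemma lt_lSucc (L : Labeling P) (v : P)
    (h : (Finset.univ.filter fun y => v < y).Nonempty) : v < lSucc L v h := by
  have hmem := Finset.min'_mem ((Finset.univ.filter fun y => v < y).image L) (h.image _)
  obtain ⟨y, hy, hLy⟩ := Finset.mem_image.mp hmem
  have heq : lSucc L v h = y := by
    unfold lSucc
    rw [← hLy, Equiv.symm_apply_apply]
  rw [heq]
  exact (Finset.mem_filter.mp hy).2

def promChainFrom (L : Labeling P) (v : P) : List P :=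
  if h : (Finset.univ.filter fun y => v < y).Nonempty then
    v :: promChainFrom L (lSucc L v h)
  else [v]
termination_by (Finset.univ.filter fun y => v < y).card
decreasing_by
  apply Finset.card_lt_card
  refine (Finset.ssubset_iff_of_subset ?_).mpr ?_
  · intro z hz
    simp only [Finset.mem_filter, Finset.mem_univ, true_and] at *
    exact lt_trans (lt_lSucc L v h) hz
  · exact ⟨lSucc L v h, by simp [lt_lSucc L v h], by simp⟩

def promote (L : Labeling P) : Labeling P :=
  if h : Nonempty P then
    ((List.formPerm (promChainFrom L (L.symm ⟨0, @Fintype.card_pos P _ h⟩))).trans L).trans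
      (finRotate (Fintype.card P)).symm
  else L

/-- The label of `x` under `L`, as an integer in `{1, …, n}`. -/
def labelOf (L : Labeling P) (x : P) : ℕ := (L x : ℕ) + 1

/-- The largest `a ∈ {0, …, n}` such that for all `j ∈ {n−a+1, …, n}`, the set
`{x ∈ P : j ≤ L(x) ≤ n}` is an upper order ideal of `P`. -/
def frozenA (L : Labeling P) : ℕ :=
  sSup {a : ℕ | a ≤ Fintype.card P ∧
    ∀ j, Fintype.card P - a + 1 ≤ j → j ≤ Fintype.card P →
      IsUpperSet {x : P | j ≤ labelOf L x ∧ labelOf L x ≤ Fintype.card P}}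

/-- `x` is frozen with respect to `L` if `n − a + 1 ≤ L(x) ≤ n`, where `a` is as in `frozenA`. -/
def IsFrozen (L : Labeling P) (x : P) : Prop :=
  Fintype.card P - frozenA L + 1 ≤ labelOf L x

/-- A labeling of an `n`-element poset is tangled if `n ≥ 2` and `∂^{n−2}(L)` is
not a linear extension. -/
def IsTangled (L : Labeling P) : Prop :=
  2 ≤ Fintype.card P ∧ ¬ IsLinearExt (promote^[Fintype.card P - 2] L)

/-- A labeling of an `n`-element poset is `k`-untangled if `n ≥ k + 2` and
`∂^{n−k−2}(L)` is not a linear extension. -/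
def IsUntangled (k : ℕ) (L : Labeling P) : Prop :=
  k + 2 ≤ Fintype.card P ∧ ¬ IsLinearExt (promote^[Fintype.card P - k - 2] L)

/-- The comparability graph of a poset. -/
def compGraph (P : Type*) [PartialOrder P] : SimpleGraph P where
  Adj x y := x ≠ y ∧ (x ≤ y ∨ y ≤ x)
  symm := by
    constructor
    intro x y hxy
    exact ⟨hxy.1.symm, hxy.2.symm⟩
  loopless := by
    constructor
    intro x hx
    exact hx.1 rfl

/-- The standardization of an injective map from a finite type into a linear order:
the unique relabeling by `{1, …, n}` with the same relative order of values. -/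
def standardize {R β : Type*} [Fintype R] [LinearOrder β]
    (f : R → β) (hf : Function.Injective f) : R ≃ Fin (Fintype.card R) :=
  have hcard : (Finset.univ.image f).card = Fintype.card R := by
    rw [Finset.card_image_of_injective _ hf, Finset.card_univ]
  (Equiv.ofBijective (fun x => (⟨f x, by simp⟩ : ↥(Finset.univ.image f)))
    (by
      rw [Fintype.bijective_iff_injective_and_card]
      refine ⟨fun a b hab => hf (congrArg Subtype.val hab), ?_⟩
      rw [Fintype.card_coe, hcard])).trans
    ((Finset.univ.image f).orderIsoOfFin hcard).symm.toEquiv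

/-- The toggle operator `τ_{k+1}`: it swaps the labels `k+1` and `k+2` (i.e. the
`Fin`-labels `k` and `k+1`) unless `L⁻¹(k+1) <_P L⁻¹(k+2)`. -/
def toggle (L : Labeling P) (k : ℕ) : Labeling P :=
  if h : k + 1 < Fintype.card P then
    if L.symm ⟨k, Nat.lt_of_succ_lt h⟩ < L.symm ⟨k + 1, h⟩ then L
    else L.trans (Equiv.swap ⟨k, Nat.lt_of_succ_lt h⟩ ⟨k + 1, h⟩)
  else L

/-- An element `x` is `L`-golden if every element strictly above it has a larger label. -/
def IsGolden (L : Labeling P) (x : P) : Prop := ∀ y : P, x < y → L x < L y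

/-- The largest label `n` of an `n`-element poset, as an element of `Fin n`. -/
def topFin (P : Type*) [Fintype P] [Nonempty P] : Fin (Fintype.card P) :=
  ⟨Fintype.card P - 1, Nat.sub_lt Fintype.card_pos Nat.one_pos⟩

section Statement14Aux

open Finset List

variable {P : Type*} [Fintype P] [PartialOrder P]

/-- generic: the element realizing the min label over a nonempty finset. -/
lemma symmMin_mem (L : Labeling P) (s : Finset P) (hs : s.Nonempty) :
    L.symm ((s.image L).min' (hs.image _)) ∈ s ∧
      L (L.symm ((s.image L).min' (hs.image _))) = (s.image L).min' (hs.image _) := by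
  obtain ⟨y, hy, hLy⟩ := Finset.mem_image.mp (Finset.min'_mem (s.image L) (hs.image _))
  constructor
  · rw [← hLy, Equiv.symm_apply_apply]; exact hy
  · exact Equiv.apply_symm_apply _ _

lemma symmMin_congr (L L' : Labeling P) (s : Finset P) (hs : s.Nonempty)
    (hag : ∀ y ∈ s, L y = L' y) :
    L.symm ((s.image L).min' (hs.image _)) = L'.symm ((s.image L').min' (hs.image _)) := by
  have himg : s.image L = s.image L' := Finset.image_congr (fun y hy => hag y hy)
  have hm : (s.image L').min' (hs.image _) = (s.image L).min' (hs.image _) := by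
    apply _root_.le_antisymm
    · exact Finset.min'_le _ _ (himg ▸ Finset.min'_mem (s.image L) (hs.image _))
    · exact Finset.min'_le _ _ (himg.symm ▸ Finset.min'_mem (s.image L') (hs.image _))
  obtain ⟨hy, hLy⟩ := symmMin_mem L s hs
  rw [hm]
  apply Equiv.injective L'
  rw [Equiv.apply_symm_apply, ← hag _ hy, hLy]

lemma lSucc_eq_symmMin (L : Labeling P) (v : P)
    (h : (Finset.univ.filter fun y => v < y).Nonempty) :
    lSucc L v h = L.symm
      ((((Finset.univ.filter fun y => v < y)).image L).min' (h.image _)) := rfl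

lemma promChain_cons (L : Labeling P) (v : P) :
    ∃ t, promChainFrom L v = v :: t := by
  rw [promChainFrom]
  split <;> exact ⟨_, rfl⟩

lemma promChain_le (L : Labeling P) (v : P) :
    ∀ w ∈ promChainFrom L v, v ≤ w := by
  intro w hw
  rw [promChainFrom] at hw
  split at hw
  · rename_i h
    rcases List.mem_cons.mp hw with rfl | hw'
    · exact le_refl _
    · exact (lt_lSucc L v h).le.trans (promChain_le L (lSucc L v h) w hw')
  · rcases List.mem_singleton.mp hw with rfl
    exact le_refl _
termination_by (Finset.univ.filter fun y => v < y).card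
decreasing_by
  apply Finset.card_lt_card
  refine (Finset.ssubset_iff_of_subset ?_).mpr ?_
  · intro z hz
    simp only [Finset.mem_filter, Finset.mem_univ, true_and] at *
    exact lt_trans (lt_lSucc L v ‹_›) hz
  · exact ⟨lSucc L v ‹_›, by simp [lt_lSucc L v ‹_›], by simp⟩

lemma promChain_chain' (L : Labeling P) (v : P) :
    List.Chain' (· < ·) (promChainFrom L v) := by
  rw [promChainFrom]
  split
  · rename_i h
    refine List.IsChain.cons (promChain_chain' L (lSucc L v h)) ?_
    intro y hy
    obtain ⟨t, ht⟩ := promChain_cons L (lSucc L v h)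
    rw [ht] at hy
    simp only [List.head?_cons, Option.mem_def, Option.some.injEq] at hy
    rw [← hy]
    exact lt_lSucc L v h
  · exact List.isChain_singleton _
termination_by (Finset.univ.filter fun y => v < y).card
decreasing_by
  apply Finset.card_lt_card
  refine (Finset.ssubset_iff_of_subset ?_).mpr ?_
  · intro z hz
    simp only [Finset.mem_filter, Finset.mem_univ, true_and] at *
    exact lt_trans (lt_lSucc L v ‹_›) hz
  · exact ⟨lSucc L v ‹_›, by simp [lt_lSucc L v ‹_›], by simp⟩

lemma promChain_nodup (L : Labeling P) (v : P) : (promChainFrom L v).Nodup :=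
  ((List.isChain_iff_pairwise.mp (promChain_chain' L v)).imp (fun h => ne_of_lt h))

lemma promChain_congr (X : Set P) (L L' : Labeling P)
    (hdown : ∀ v ∉ X, ∀ y, v < y → y ∉ X)
    (hagree : ∀ z ∉ X, L z = L' z) :
    ∀ v ∉ X, promChainFrom L v = promChainFrom L' v := by
  intro v hv
  rw [promChainFrom, promChainFrom]
  by_cases h : (Finset.univ.filter fun y => v < y).Nonempty
  · rw [dif_pos h, dif_pos h]
    have hs : lSucc L v h = lSucc L' v h := by
      rw [lSucc_eq_symmMin, lSucc_eq_symmMin]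
      exact symmMin_congr L L' _ h (fun y hy =>
        hagree y (hdown v hv y (Finset.mem_filter.mp hy).2))
    rw [hs]
    have hns : lSucc L' v h ∉ X := hdown v hv _ (hs ▸ lt_lSucc L v h)
    rw [promChain_congr X L L' hdown hagree (lSucc L' v h) hns]
  · rw [dif_neg h, dif_neg h]
termination_by v _ => (Finset.univ.filter fun y => v < y).card
decreasing_by
  apply Finset.card_lt_card
  refine (Finset.ssubset_iff_of_subset ?_).mpr ?_
  · intro z hz
    simp only [Finset.mem_filter, Finset.mem_univ, true_and] at *
    exact lt_trans (hs ▸ lt_lSucc L v ‹_›) hz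
  · exact ⟨lSucc L' v ‹_›, by simp [hs ▸ lt_lSucc L v ‹_›], by simp⟩

/-- The element above `x` (inclusive) with the smallest label. -/
def exitPt (L : Labeling P) (x : P) : P :=
  L.symm (((Finset.univ.filter fun y => x ≤ y).image L).min'
    (Finset.Nonempty.image (⟨x, by simp⟩ : (Finset.univ.filter fun y => x ≤ y).Nonempty) _))

lemma le_exitPt (L : Labeling P) (x : P) : x ≤ exitPt L x := by
  have := (symmMin_mem L (Finset.univ.filter fun y => x ≤ y) ⟨x, by simp⟩).1
  exact (Finset.mem_filter.mp this).2

lemma exitPt_label (L : Labeling P) (x : P) :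
    L (exitPt L x) = ((Finset.univ.filter fun y => x ≤ y).image L).min'
      (Finset.Nonempty.image (⟨x, by simp⟩ : (Finset.univ.filter fun y => x ≤ y).Nonempty) _) :=
  (symmMin_mem L (Finset.univ.filter fun y => x ≤ y) ⟨x, by simp⟩).2

/-- The promotion chain from a point of `X` splits as a part inside `X`
followed by the chain from the exit point. -/
lemma promChain_exit (x : P) (X : Set P) (hX : X = {y : P | y < x})
    (hcomp : ∀ z : P, (∃ w ∈ X, z ≤ w ∨ w ≤ z) → (z ≤ x ∨ x ≤ z))
    (L : Labeling P) :
    ∀ v ∈ X, ∃ A : List P, (∀ a ∈ A, a ∈ X) ∧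
      promChainFrom L v = A ++ promChainFrom L (exitPt L x) := by
  intro v hv
  have hvx : v < x := by rw [hX] at hv; exact hv
  have h : (Finset.univ.filter fun y => v < y).Nonempty := ⟨x, by simp [hvx]⟩
  rw [promChainFrom, dif_pos h]
  by_cases hsX : lSucc L v h ∈ X
  · obtain ⟨A, hA, hchain⟩ := promChain_exit x X hX hcomp L (lSucc L v h) hsX
    refine ⟨v :: A, ?_, by rw [hchain]; rfl⟩
    intro a ha
    rcases List.mem_cons.mp ha with rfl | ha'
    · exact hv
    · exact hA a ha'
  · -- the successor leaves X, so it must be the exit point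
    have hxs : x ≤ lSucc L v h := by
      rcases hcomp (lSucc L v h) ⟨v, hv, Or.inr (lt_lSucc L v h).le⟩ with hle | hge
      · rcases lt_or_eq_of_le hle with hlt | heq
        · exact absurd (by rw [hX]; exact hlt) hsX
        · exact heq.ge
      · exact hge
    have hUsub : (Finset.univ.filter fun y => x ≤ y) ⊆
        (Finset.univ.filter fun y => v < y) := by
      intro u hu
      simp only [Finset.mem_filter, Finset.mem_univ, true_and] at *
      exact lt_of_lt_of_le hvx hu
    have hexit_mem : exitPt L x ∈ (Finset.univ.filter fun y => v < y) :=
      hUsub (by simp [le_exitPt L x])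
    have h1 : L (lSucc L v h) ≤ L (exitPt L x) := by
      rw [lSucc_eq_symmMin, (symmMin_mem L _ h).2]
      exact Finset.min'_le _ _ (Finset.mem_image_of_mem L hexit_mem)
    have h2 : L (exitPt L x) ≤ L (lSucc L v h) := by
      rw [exitPt_label]
      exact Finset.min'_le _ _ (Finset.mem_image_of_mem L (by simp [hxs]))
    have heq : lSucc L v h = exitPt L x := L.injective (_root_.le_antisymm h1 h2)
    exact ⟨[v], by simp [hv], by rw [heq]; rfl⟩
termination_by v _ => (Finset.univ.filter fun y => v < y).card
decreasing_by
  apply Finset.card_lt_card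
  refine (Finset.ssubset_iff_of_subset ?_).mpr ?_
  · intro z hz
    simp only [Finset.mem_filter, Finset.mem_univ, true_and] at *
    exact lt_trans (lt_lSucc L v ‹_›) hz
  · exact ⟨lSucc L v ‹_›, by simp [lt_lSucc L v ‹_›], by simp⟩

lemma key_formPerm (x : P) (X : Set P) (hX : X = {y : P | y < x})
    (hcomp : ∀ z : P, (∃ w ∈ X, z ≤ w ∨ w ≤ z) → (z ≤ x ∨ x ≤ z))
    (L L' : Labeling P) (hagree : ∀ z ∉ X, L z = L' z)
    (z : P) (hz : z ∉ X) (i0 : Fin (Fintype.card P)) (hi0 : (i0 : ℕ) = 0) :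
    L ((promChainFrom L (L.symm i0)).formPerm z) =
      L' ((promChainFrom L' (L'.symm i0)).formPerm z) := by
  have hdown : ∀ v ∉ X, ∀ y, v < y → y ∉ X := by
    intro v hv y hvy hy
    rw [hX] at hv hy
    exact hv (lt_trans hvy hy)
  by_cases hv1 : L.symm i0 ∈ X
  · -- the chain starts inside X
    have hv1' : L'.symm i0 ∈ X := by
      by_contra hcon
      have : L.symm i0 = L'.symm i0 :=
        (Equiv.symm_apply_eq L).mpr (by rw [hagree _ hcon, Equiv.apply_symm_apply])
      exact hcon (this ▸ hv1)
    have hUagree : ∀ u ∈ (Finset.univ.filter fun y => x ≤ y), L u = L' u := by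
      intro u hu
      refine hagree u ?_
      intro hmem
      rw [hX] at hmem
      simp only [Set.mem_setOf_eq] at hmem
      exact hmem.not_ge (Finset.mem_filter.mp hu).2
    have hm : exitPt L x = exitPt L' x :=
      symmMin_congr L L' _ ⟨x, by simp⟩ hUagree
    have hmX : exitPt L x ∉ X := by
      intro hmem
      rw [hX] at hmem
      simp only [Set.mem_setOf_eq] at hmem
      exact hmem.not_ge (le_exitPt L x)
    have hC : promChainFrom L' (exitPt L' x) = promChainFrom L (exitPt L x) := by
      rw [← hm]
      exact (promChain_congr X L L' hdown hagree _ hmX).symm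
    obtain ⟨A, hA, hchL⟩ := promChain_exit x X hX hcomp L (L.symm i0) hv1
    obtain ⟨A', hA', hchL''⟩ := promChain_exit x X hX hcomp L' (L'.symm i0) hv1'
    set C := promChainFrom L (exitPt L x) with hCdef
    have hchL' : promChainFrom L' (L'.symm i0) = A' ++ C := by rw [hchL'', hC]
    have hCne : C ≠ [] := by
      obtain ⟨t, ht⟩ := promChain_cons L (exitPt L x)
      rw [← hCdef] at ht
      simp [ht]
    have hCX : ∀ w ∈ C, w ∉ X := by
      intro w hw
      rcases eq_or_lt_of_le (promChain_le L (exitPt L x) w hw) with h | h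
      · exact h ▸ hmX
      · exact hdown _ hmX _ h
    have hnodL : (A ++ C).Nodup := hchL ▸ promChain_nodup L _
    have hnodL' : (A' ++ C).Nodup := hchL' ▸ promChain_nodup L' _
    rw [hchL, hchL']
    by_cases hzC : z ∈ C
    · obtain ⟨j, hj, hzj⟩ := List.getElem_of_mem hzC
      by_cases hlast : j + 1 < C.length
      · -- z is not the last element: both permutations send it to the next element of C
        have heq : ∀ (B : List P), (B ++ C).Nodup → (B ++ C).formPerm z = C[j + 1] := by
          intro B hnod
          have h1 : (B ++ C)[j + B.length]'(by simp [List.length_append]; omega) = z := by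
            rw [← List.getElem_append_right' B hj, hzj]
          have h2 : (B ++ C)[j + B.length + 1]'(by simp [List.length_append]; omega)
              = C[j + 1] := by
            rw [List.getElem_append_right' B hlast]
            exact getElem_congr_idx (by omega)
          rw [← h1, List.formPerm_apply_lt_getElem _ hnod _
            (by simp [List.length_append]; omega), h2]
        rw [heq A hnodL, heq A' hnodL']
        exact hagree _ (hCX _ (List.getElem_mem _))
      · -- z is the last element: both permutations send it to the head, which has label i0
        have hjlast : j = C.length - 1 := by omega
        have hzlast : C.getLast hCne = z := by
          rw [List.getLast_eq_getElem]
          exact (getElem_congr_idx (by omega : C.length - 1 = j)).trans hzj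
        have heq : ∀ (B : List P) (L₀ : Labeling P), promChainFrom L₀ (L₀.symm i0) = B ++ C →
            (B ++ C).formPerm z = L₀.symm i0 := by
          intro B L₀ hch
          obtain ⟨t, ht⟩ := promChain_cons L₀ (L₀.symm i0)
          rw [hch] at ht
          have h1 : (B ++ C).getLast (by simp [hCne]) = z := by
            rw [List.getLast_append_of_ne_nil _ hCne]
            exact hzlast
          have hgl : (L₀.symm i0 :: t).getLast (List.cons_ne_nil _ _) = z := by
            rw [List.getLast_eq_getElem, ← h1, List.getLast_eq_getElem]
            exact (getElem_congr_coll ht.symm).trans (getElem_congr_idx (by rw [ht]))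
          rw [ht]
          exact (List.formPerm_eq_head_iff_eq_getLast t z (L₀.symm i0)).mpr hgl.symm
        rw [heq A L hchL, heq A' L' hchL']
        simp
    · -- z is not in the chain at all
      have hzA : z ∉ A ++ C := by
        simp only [List.mem_append]
        rintro (h | h)
        · exact hz (hA z h)
        · exact hzC h
      have hzA' : z ∉ A' ++ C := by
        simp only [List.mem_append]
        rintro (h | h)
        · exact hz (hA' z h)
        · exact hzC h
      rw [List.formPerm_apply_of_notMem hzA, List.formPerm_apply_of_notMem hzA']
      exact hagree z hz
  · -- the chain starts outside X and never meets it
    have hv1' : L'.symm i0 = L.symm i0 :=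
      (Equiv.symm_apply_eq L').mpr (by rw [← hagree _ hv1, Equiv.apply_symm_apply])
    rw [hv1', ← promChain_congr X L L' hdown hagree _ hv1]
    set C := promChainFrom L (L.symm i0) with hCdef
    have hCX : ∀ w ∈ C, w ∉ X := by
      intro w hw
      rcases eq_or_lt_of_le (promChain_le L (L.symm i0) w hw) with h | h
      · exact h ▸ hv1
      · exact hdown _ hv1 _ h
    by_cases hzC : z ∈ C
    · exact hagree _ (hCX _ (List.formPerm_apply_mem_of_mem hzC))
    · rw [List.formPerm_apply_of_notMem hzC]
      exact hagree z hz

lemma promote_congr (x : P) (X : Set P) (hX : X = {y : P | y < x})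
    (hcomp : ∀ z : P, (∃ w ∈ X, z ≤ w ∨ w ≤ z) → (z ≤ x ∨ x ≤ z))
    (L L' : Labeling P) (hagree : ∀ z ∉ X, L z = L' z) :
    ∀ z ∉ X, promote L z = promote L' z := by
  have hne : Nonempty P := ⟨x⟩
  intro z hz
  rw [promote, promote, dif_pos hne, dif_pos hne]
  simp only [Equiv.trans_apply]
  exact congrArg _ (key_formPerm x X hX hcomp L L' hagree z hz _ rfl)

end Statement14Aux

/-- Let `X = {y : y <_P x}` and suppose every element comparable with
some element of `X` is comparable with `x`.  If two labelings agree on `P ∖ X`,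
then so do their images under `∂^γ` for every `γ ≥ 1`. -/
theorem promote_agree_off_ideal (x : P) (X : Set P) (hX : X = {y : P | y < x})
    (hcomp : ∀ z : P, (∃ w ∈ X, z ≤ w ∨ w ≤ z) → (z ≤ x ∨ x ≤ z))
    (L L' : Labeling P) (hagree : ∀ z ∉ X, L z = L' z) (γ : ℕ) (hγ : 1 ≤ γ) :
    ∀ z ∉ X, promote^[γ] L z = promote^[γ] L' z := by
  clear hγ
  induction γ with
  | zero => simpa using hagree
  | succ n ih =>
    intro z hz
    rw [Function.iterate_succ_apply', Function.iterate_succ_apply']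
    exact promote_congr x X hX hcomp _ _ ih z hz

end
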